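/- Consider the integer program max{c^T x : Ax = b, l ≤ x ≤ u, x ∈ ℤ^n} with A ∈ ℤ^{m×n}, b ∈ ℤ^m, c ∈ ℤ^n and bounds l, u ∈ (ℤ ∪ {−∞, +∞})^n. Let z₀ be a feasible solution and z* a feasible solution with c^T z* > c^T z₀. Then there exist an element g of the Graver basis of A and a positive integer λ such that z₀ + λg is feasible and λ · c^T g ≥ c^T(z* − z₀) / (2n). -/

import Mathlib

/-- Two integer vectors are sign-compatible if they agree in sign componentwise. -/
def SignCompat {ι : Type*} (u v : ι → ℤ) : Prop := ∀ i, 0 ≤ u i * v i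

/-- A cycle of an integer matrix `A` is an integer vector in its kernel. -/
def IsCycle {R C : Type*} [Fintype C] (A : Matrix R C ℤ) (y : C → ℤ) : Prop :=
  A.mulVec y = 0

/-- The Graver basis of `A` consists of the nonzero cycles of `A` that cannot be
written as the sum of two sign-compatible nonzero cycles of `A`. -/
def InGraverBasis {R C : Type*} [Fintype C] (A : Matrix R C ℤ) (y : C → ℤ) : Prop :=
  IsCycle A y ∧ y ≠ 0 ∧
    ¬ ∃ u v : C → ℤ, IsCycle A u ∧ IsCycle A v ∧ u ≠ 0 ∧ v ≠ 0 ∧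
      SignCompat u v ∧ y = u + v

/-- The extended integers `ℤ ∪ {−∞, +∞}`, used for lower and upper bounds. -/
abbrev ZInf := WithBot (WithTop ℤ)

/-- The canonical embedding of `ℤ` into `ℤ ∪ {−∞, +∞}`. -/
def zc (x : ℤ) : ZInf := ((x : WithTop ℤ) : ZInf)

/-- A point `x ∈ ℤ^n` is feasible if `Ax = b` and `l ≤ x ≤ u` componentwise. -/
def IsFeasible {m n : ℕ} (A : Matrix (Fin m) (Fin n) ℤ) (b : Fin m → ℤ)
    (l u : Fin n → ZInf) (x : Fin n → ℤ) : Prop :=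
  A.mulVec x = b ∧ ∀ j, l j ≤ zc (x j) ∧ zc (x j) ≤ u j

namespace AGS


variable {m n : ℕ}

/-- `x` lies between `0` and `y` componentwise. -/
def Btw {n : ℕ} (y x : Fin n → ℤ) : Prop :=
  ∀ j, (0 ≤ x j ∧ x j ≤ y j) ∨ (y j ≤ x j ∧ x j ≤ 0)

lemma btw_refl (y : Fin n → ℤ) : Btw y y := fun j => by omega

lemma btw_trans {y x w : Fin n → ℤ} (h1 : Btw y x) (h2 : Btw x w) : Btw y w := fun j => by
  rcases h1 j with ⟨a,b⟩|⟨a,b⟩ <;> rcases h2 j with ⟨c,d⟩|⟨c,d⟩ <;> omega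

def norm1 {n : ℕ} (x : Fin n → ℤ) : ℕ := ∑ j, (x j).natAbs

lemma norm1_eq_zero {x : Fin n → ℤ} (h : norm1 x = 0) : x = 0 := by
  funext j
  have := (Finset.sum_eq_zero_iff (s := Finset.univ)
    (f := fun j => (x j).natAbs)).mp h j (Finset.mem_univ j)
  simpa [Int.natAbs_eq_zero] using this

lemma sign_cases {a b : ℤ} (h : 0 ≤ a * b) : (0 ≤ a ∧ 0 ≤ b) ∨ (a ≤ 0 ∧ b ≤ 0) :=
  mul_nonneg_iff.mp h

lemma graver_decomp (A : Matrix (Fin m) (Fin n) ℤ) :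
    ∀ (N : ℕ) (x : Fin n → ℤ), norm1 x ≤ N → IsCycle A x →
    ∃ L : Multiset (Fin n → ℤ), (∀ h ∈ L, InGraverBasis A h ∧ Btw x h) ∧ L.sum = x := by
  intro N
  induction N with
  | zero =>
    intro x hx _
    have : x = 0 := norm1_eq_zero (Nat.le_zero.mp hx)
    exact ⟨0, by simp, by simp [this]⟩
  | succ N ih =>
    intro x hx hcyc
    by_cases h0 : x = 0
    · exact ⟨0, by simp, by simp [h0]⟩
    by_cases hg : InGraverBasis A x
    · refine ⟨{x}, ?_, by simp⟩
      intro h hh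
      rw [Multiset.mem_singleton] at hh
      subst hh
      exact ⟨hg, btw_refl _⟩
    · have hex : ∃ u v, IsCycle A u ∧ IsCycle A v ∧ u ≠ 0 ∧ v ≠ 0 ∧
          SignCompat u v ∧ x = u + v := by
        by_contra hcon; exact hg ⟨hcyc, h0, hcon⟩
      obtain ⟨uu, vv, hu, hv, hu0, hv0, hsc, hx'⟩ := hex
      have hxj : ∀ j, x j = uu j + vv j := fun j => by rw [hx']; rfl
      have hbu : Btw x uu := fun j => by
        have := sign_cases (hsc j); have := hxj j; omega
      have hbv : Btw x vv := fun j => by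
        have := sign_cases (hsc j); have := hxj j; omega
      have hnorm : ∀ j, (x j).natAbs = (uu j).natAbs + (vv j).natAbs := fun j => by
        have := sign_cases (hsc j); have := hxj j; omega
      have hnx : norm1 x = norm1 uu + norm1 vv := by
        unfold norm1
        rw [← Finset.sum_add_distrib]
        exact Finset.sum_congr rfl (fun j _ => hnorm j)
      have hupos : 1 ≤ norm1 uu := by
        rcases Nat.eq_zero_or_pos (norm1 uu) with h | h
        · exact absurd (norm1_eq_zero h) hu0
        · exact h
      have hvpos : 1 ≤ norm1 vv := by
        rcases Nat.eq_zero_or_pos (norm1 vv) with h | h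
        · exact absurd (norm1_eq_zero h) hv0
        · exact h
      obtain ⟨L1, hL1, hs1⟩ := ih uu (by omega) hu
      obtain ⟨L2, hL2, hs2⟩ := ih vv (by omega) hv
      refine ⟨L1 + L2, ?_, by rw [Multiset.sum_add, hs1, hs2, hx']⟩
      intro h hh
      rcases Multiset.mem_add.mp hh with h' | h'
      · exact ⟨(hL1 h h').1, btw_trans hbu (hL1 h h').2⟩
      · exact ⟨(hL2 h h').1, btw_trans hbv (hL2 h h').2⟩

def Q {n : ℕ} (g : Fin n → ℤ) : Fin n → ℚ := fun j => (g j : ℚ)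

open scoped Classical in
noncomputable def supp {n : ℕ} (G : Finset (Fin n → ℤ)) (ν : (Fin n → ℤ) → ℚ) :
    Finset (Fin n → ℤ) := G.filter (fun g => ν g ≠ 0)

lemma mem_supp {G : Finset (Fin n → ℤ)} {ν : (Fin n → ℤ) → ℚ} {g} :
    g ∈ supp G ν ↔ g ∈ G ∧ ν g ≠ 0 := by
  classical simp [supp]

def Feas {n : ℕ} (G : Finset (Fin n → ℤ)) (y : Fin n → ℤ) (ν : (Fin n → ℤ) → ℚ) : Prop :=
  (∀ g ∈ G, 0 ≤ ν g) ∧ ∀ j, (∑ g ∈ G, ν g * (g j : ℚ)) = (y j : ℚ)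

def val {n : ℕ} (G : Finset (Fin n → ℤ)) (ν : (Fin n → ℤ) → ℚ) : ℚ := ∑ g ∈ G, ν g

def Indep {n : ℕ} (S : Finset (Fin n → ℤ)) : Prop :=
  LinearIndependent ℚ (fun g : ↥S => Q (g : Fin n → ℤ))

/-- key positivity: a nonnegative combination of nonzero conformal vectors summing to 0 is 0 -/
lemma phi_zero {y : Fin n → ℤ} {G : Finset (Fin n → ℤ)}
    (hG : ∀ g ∈ G, Btw y g ∧ g ≠ 0)
    (α : (Fin n → ℤ) → ℚ) (hnn : ∀ g ∈ G, 0 ≤ α g)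
    (hsum : ∀ j, ∑ g ∈ G, α g * (g j : ℚ) = 0) : ∀ g ∈ G, α g = 0 := by
  have hnorm : ∀ g ∈ G, (norm1 g : ℚ)
      = ∑ j, (if 0 ≤ y j then (1:ℚ) else -1) * (g j : ℚ) := by
    intro g hg
    have : (norm1 g : ℚ) = ∑ j, ((g j).natAbs : ℚ) := by
      unfold norm1; push_cast; ring
    rw [this]
    refine Finset.sum_congr rfl fun j _ => ?_
    have hb := (hG g hg).1 j
    by_cases hy : 0 ≤ y j
    · have h2 : (0:ℤ) ≤ g j := by omega
      simp only [if_pos hy, one_mul]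
      rw [Nat.cast_natAbs]
      exact_mod_cast abs_of_nonneg h2
    · have h2 : g j ≤ (0:ℤ) := by omega
      simp only [if_neg hy, neg_one_mul]
      rw [Nat.cast_natAbs]
      exact_mod_cast abs_of_nonpos h2
  have key : ∑ g ∈ G, α g * (norm1 g : ℚ) = 0 := by
    calc ∑ g ∈ G, α g * (norm1 g : ℚ)
        = ∑ g ∈ G, ∑ j, (if 0 ≤ y j then (1:ℚ) else -1) * (α g * (g j : ℚ)) := by
          refine Finset.sum_congr rfl fun g hg => ?_
          rw [hnorm g hg, Finset.mul_sum]
          exact Finset.sum_congr rfl fun j _ => by ring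
      _ = ∑ j, (if 0 ≤ y j then (1:ℚ) else -1) * ∑ g ∈ G, α g * (g j : ℚ) := by
          rw [Finset.sum_comm]
          exact Finset.sum_congr rfl fun j _ => by rw [Finset.mul_sum]
      _ = 0 := by simp [hsum]
  intro g hg
  have hterm := (Finset.sum_eq_zero_iff_of_nonneg (fun g hg' => by
      have h1 : (0:ℚ) ≤ (norm1 g : ℚ) := by positivity
      exact mul_nonneg (hnn g hg') h1)).mp key g hg
  have hne : (norm1 g : ℚ) ≠ 0 := by
    have : norm1 g ≠ 0 := fun h => (hG g hg).2 (norm1_eq_zero h)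
    exact_mod_cast this
  exact (mul_eq_zero.mp hterm).resolve_right hne


lemma supp_subset {G : Finset (Fin n → ℤ)} {ν : (Fin n → ℤ) → ℚ} :
    supp G ν ⊆ G := fun g hg => (mem_supp.mp hg).1

lemma reduce {y : Fin n → ℤ} {G : Finset (Fin n → ℤ)} (hG : ∀ g ∈ G, Btw y g ∧ g ≠ 0) :
    ∀ (k : ℕ) (ν : (Fin n → ℤ) → ℚ), (supp G ν).card ≤ k → Feas G y ν →
    ∃ ν', Feas G y ν' ∧ val G ν ≤ val G ν' ∧ supp G ν' ⊆ supp G ν ∧ Indep (supp G ν') := by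
  intro k
  induction k with
  | zero =>
    intro ν hcard hF
    refine ⟨ν, hF, le_refl _, Finset.Subset.refl _, ?_⟩
    have hS : supp G ν = ∅ := Finset.card_eq_zero.mp (Nat.le_zero.mp hcard)
    haveI : IsEmpty ↥(supp G ν) :=
      ⟨fun i => Finset.eq_empty_iff_forall_notMem.mp hS ↑i i.2⟩
    exact linearIndependent_empty_type
  | succ k ih =>
    intro ν hcard hF
    by_cases hind : Indep (supp G ν)
    · exact ⟨ν, hF, le_refl _, Finset.Subset.refl _, hind⟩
    unfold Indep at hind
    set S := supp G ν with hSdef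
    have hSsubG : S ⊆ G := supp_subset
    obtain ⟨α0, hα0, i0, hi0⟩ := Fintype.not_linearIndependent_iff.mp hind
    classical
    set β : (Fin n → ℤ) → ℚ := fun g => if h : g ∈ S then α0 ⟨g, h⟩ else 0 with hβdef
    have hβS : ∀ g ∉ S, β g = 0 := fun g hg => dif_neg hg
    have hβi0 : β ↑i0 = α0 i0 := by
      simp only [hβdef]; rw [dif_pos i0.2]
    have hβvecS : ∑ g ∈ S, β g • Q g = (0 : Fin n → ℚ) := by
      have hcoe : ∑ i : ↥S, β ↑i • Q (↑i : Fin n → ℤ) = ∑ g ∈ S, β g • Q g :=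
        Finset.sum_coe_sort S (fun g => β g • Q g)
      rw [← hcoe]
      have heq : ∀ i : ↥S, β ↑i • Q (↑i : Fin n → ℤ) = α0 i • Q ↑i := fun i => by
        have hb : β ↑i = α0 i := by
          simp only [hβdef]; rw [dif_pos i.2]
        rw [hb]
      rw [Finset.sum_congr rfl (fun i _ => heq i)]
      exact hα0
    have hβvec : ∀ j, ∑ g ∈ G, β g * (g j : ℚ) = 0 := by
      intro j
      have h1 : ∑ g ∈ G, β g * (g j:ℚ) = ∑ g ∈ S, β g * (g j:ℚ) :=
        (Finset.sum_subset hSsubG (fun g _ hns => by rw [hβS g hns, zero_mul])).symm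
      rw [h1]
      have h2 := congrFun hβvecS j
      rw [Finset.sum_apply] at h2
      simpa [Q] using h2
    obtain ⟨γ, hγS, hγvec, hγval, hγi0⟩ :
        ∃ γ : (Fin n → ℤ) → ℚ, (∀ g ∉ S, γ g = 0) ∧ (∀ j, ∑ g ∈ G, γ g * (g j:ℚ) = 0) ∧
          0 ≤ ∑ g ∈ G, γ g ∧ γ ↑i0 ≠ 0 := by
      rcases le_or_gt 0 (∑ g ∈ G, β g) with hpos | hneg
      · exact ⟨β, hβS, hβvec, hpos, by rw [hβi0]; exact hi0⟩
      · refine ⟨fun g => -β g, ?_, ?_, ?_, ?_⟩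
        · intro g hg; simp [hβS g hg]
        · intro j
          have h3 : ∑ g ∈ G, -β g * (g j:ℚ) = -∑ g ∈ G, β g * (g j:ℚ) := by
            rw [← Finset.sum_neg_distrib]
            exact Finset.sum_congr rfl fun g _ => by ring
          simpa [h3] using congrArg Neg.neg (hβvec j)
        · have h3 : ∑ g ∈ G, -β g = -∑ g ∈ G, β g := Finset.sum_neg_distrib _
          simp only []
          rw [h3]; linarith
        · simpa [hβi0] using hi0
    have hex : ∃ g1 ∈ S, γ g1 < 0 := by
      by_contra hcon
      push_neg at hcon
      have hnn : ∀ g ∈ G, 0 ≤ γ g := by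
        intro g hg
        by_cases hgS : g ∈ S
        · exact hcon g hgS
        · rw [hγS g hgS]
      exact hγi0 (phi_zero hG γ hnn hγvec ↑i0 (hSsubG i0.2))
    obtain ⟨g1, hg1S, hg1neg⟩ := hex
    set T := S.filter (fun g => γ g < 0) with hT
    have hTne : T.Nonempty := ⟨g1, Finset.mem_filter.mpr ⟨hg1S, hg1neg⟩⟩
    obtain ⟨g2, hg2T, hg2min⟩ := Finset.exists_min_image T (fun g => ν g / (-γ g)) hTne
    have hg2S : g2 ∈ S := (Finset.mem_filter.mp hg2T).1
    have hγg2 : γ g2 < 0 := (Finset.mem_filter.mp hg2T).2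
    set s := ν g2 / (-γ g2) with hs
    have hνg2 : 0 ≤ ν g2 := hF.1 g2 (hSsubG hg2S)
    have hs0 : 0 ≤ s := div_nonneg hνg2 (by linarith)
    set ν' : (Fin n → ℤ) → ℚ := fun g => ν g + s * γ g with hν'
    have hF' : Feas G y ν' := by
      constructor
      · intro g hg
        rcases lt_or_ge (γ g) 0 with hneg | hpos
        · have hgS : g ∈ S := by
            by_contra hgS; rw [hγS g hgS] at hneg; exact lt_irrefl 0 hneg
          have hgT : g ∈ T := Finset.mem_filter.mpr ⟨hgS, hneg⟩
          have hmin := hg2min g hgT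
          have h2 : s * (-γ g) ≤ ν g := by
            rw [← le_div_iff₀ (by linarith : (0:ℚ) < -γ g)]
            exact hmin
          simp only [hν']
          nlinarith
        · have := hF.1 g hg
          simp only [hν']
          nlinarith
      · intro j
        have expand : ∑ g ∈ G, (ν g + s * γ g) * (g j:ℚ)
            = ∑ g ∈ G, ν g * (g j:ℚ) + s * ∑ g ∈ G, γ g * (g j:ℚ) := by
          rw [Finset.mul_sum, ← Finset.sum_add_distrib]
          exact Finset.sum_congr rfl fun g _ => by ring
        simp only [hν']
        rw [expand, hF.2 j, hγvec j, mul_zero, add_zero]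
    have hval : val G ν ≤ val G ν' := by
      unfold val
      have expand : ∑ g ∈ G, (ν g + s * γ g) = ∑ g ∈ G, ν g + s * ∑ g ∈ G, γ g := by
        rw [Finset.mul_sum, ← Finset.sum_add_distrib]
      simp only [hν']
      rw [expand]
      nlinarith
    have hν'g2 : ν' g2 = 0 := by
      have hne : γ g2 ≠ 0 := ne_of_lt hγg2
      have h2 : s * γ g2 = -ν g2 := by
        rw [hs]
        field_simp
      show ν g2 + s * γ g2 = 0
      rw [h2]; ring
    have hsupp' : supp G ν' ⊆ S := by
      intro g hg
      obtain ⟨hgG, hgne⟩ := mem_supp.mp hg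
      by_contra hgS
      have h1 : ν g = 0 := by
        by_contra h; exact hgS (mem_supp.mpr ⟨hgG, h⟩)
      exact hgne (by simp only [hν']; rw [h1, hγS g hgS]; ring)
    have hssub : supp G ν' ⊂ S := ⟨hsupp', fun hsub => by
      have hmem : g2 ∈ supp G ν' := hsub hg2S
      exact (mem_supp.mp hmem).2 hν'g2⟩
    have hcard' : (supp G ν').card ≤ k := by
      have := Finset.card_lt_card hssub
      omega
    obtain ⟨ν'', h1, h2, h3, h4⟩ := ih ν' hcard' hF'
    exact ⟨ν'', h1, le_trans hval h2, Finset.Subset.trans h3 hsupp', h4⟩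


lemma unique_on_indep {y : Fin n → ℤ} {G S : Finset (Fin n → ℤ)} (hS : S ⊆ G)
    (hind : Indep S) {ν1 ν2 : (Fin n → ℤ) → ℚ}
    (h1 : ∀ j, ∑ g ∈ G, ν1 g * (g j:ℚ) = (y j:ℚ))
    (h2 : ∀ j, ∑ g ∈ G, ν2 g * (g j:ℚ) = (y j:ℚ))
    (hs1 : ∀ g ∈ G, g ∉ S → ν1 g = 0) (hs2 : ∀ g ∈ G, g ∉ S → ν2 g = 0) :
    ∀ g ∈ G, ν1 g = ν2 g := by
  classical
  set δ : (Fin n → ℤ) → ℚ := fun g => ν1 g - ν2 g with hδ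
  have hδG : ∀ j, ∑ g ∈ G, δ g * (g j:ℚ) = 0 := by
    intro j
    have hexp : ∑ g ∈ G, (ν1 g - ν2 g) * (g j:ℚ)
        = ∑ g ∈ G, ν1 g * (g j:ℚ) - ∑ g ∈ G, ν2 g * (g j:ℚ) := by
      rw [← Finset.sum_sub_distrib]
      exact Finset.sum_congr rfl fun g _ => by ring
    simp only [hδ]
    rw [hexp, h1 j, h2 j, sub_self]
  have hδ0 : ∀ g ∈ G, g ∉ S → δ g = 0 := fun g hg hns => by
    simp only [hδ]; rw [hs1 g hg hns, hs2 g hg hns, sub_self]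
  have hδS : ∀ j, ∑ g ∈ S, δ g * (g j:ℚ) = 0 := by
    intro j
    have hsub := Finset.sum_subset hS (f := fun g => δ g * (g j:ℚ))
      (fun g hg hns => by show δ g * (g j:ℚ) = 0; rw [hδ0 g hg hns, zero_mul])
    rw [hsub]
    exact hδG j
  have hvec : ∑ i : ↥S, δ ↑i • Q (↑i : Fin n → ℤ) = (0 : Fin n → ℚ) := by
    funext j
    rw [Finset.sum_apply]
    have hterm : ∀ i : ↥S, (δ ↑i • Q (↑i : Fin n → ℤ)) j
        = δ ↑i * ((↑i : Fin n → ℤ) j : ℚ) := fun i => rfl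
    rw [Finset.sum_congr rfl (fun i _ => hterm i),
      Finset.sum_coe_sort S (fun g => δ g * (g j:ℚ))]
    simpa using hδS j
  have hz := Fintype.linearIndependent_iff.mp hind (fun i => δ ↑i) hvec
  intro g hg
  by_cases hgS : g ∈ S
  · have := hz ⟨g, hgS⟩
    simp only [hδ] at this
    linarith
  · rw [hs1 g hg hgS, hs2 g hg hgS]

lemma exists_max {y : Fin n → ℤ} {G : Finset (Fin n → ℤ)} (hG : ∀ g ∈ G, Btw y g ∧ g ≠ 0)
    {ν0 : (Fin n → ℤ) → ℚ} (h0 : Feas G y ν0) :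
    ∃ ν, Feas G y ν ∧ Indep (supp G ν) ∧ ∀ ν2, Feas G y ν2 → val G ν2 ≤ val G ν := by
  classical
  set W : Set ((Fin n → ℤ) → ℚ) :=
    {ν | Feas G y ν ∧ Indep (supp G ν) ∧ ∀ g ∉ G, ν g = 0} with hW
  have hnorm : ∀ ν, Feas G y ν → ∃ w ∈ W, val G ν ≤ val G w := by
    intro ν hF
    set νb : (Fin n → ℤ) → ℚ := fun g => if g ∈ G then ν g else 0 with hνb
    have hFb : Feas G y νb := by
      constructor
      · intro g hg; simp only [hνb, if_pos hg]; exact hF.1 g hg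
      · intro j
        rw [← hF.2 j]
        exact Finset.sum_congr rfl fun g hg => by simp only [hνb, if_pos hg]
    obtain ⟨ν', h1, h2, h3, h4⟩ := reduce hG (supp G νb).card νb (le_refl _) hFb
    set ν'' : (Fin n → ℤ) → ℚ := fun g => if g ∈ G then ν' g else 0 with hν''
    have hsupp_eq : supp G ν'' = supp G ν' := by
      ext g
      simp only [mem_supp]
      constructor
      · rintro ⟨hg, hne⟩
        refine ⟨hg, ?_⟩
        simpa only [hν'', if_pos hg] using hne
      · rintro ⟨hg, hne⟩
        exact ⟨hg, by simpa only [hν'', if_pos hg] using hne⟩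
    have hF'' : Feas G y ν'' := by
      constructor
      · intro g hg; simp only [hν'', if_pos hg]; exact h1.1 g hg
      · intro j
        rw [← h1.2 j]
        exact Finset.sum_congr rfl fun g hg => by simp only [hν'', if_pos hg]
    have hval2 : val G ν'' = val G ν' :=
      Finset.sum_congr rfl fun g hg => by simp only [hν'', if_pos hg]
    have hvalb : val G νb = val G ν :=
      Finset.sum_congr rfl fun g hg => by simp only [hνb, if_pos hg]
    refine ⟨ν'', ⟨hF'', by rw [hsupp_eq]; exact h4, fun g hg => if_neg hg⟩, ?_⟩
    rw [hval2]
    calc val G ν = val G νb := hvalb.symm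
      _ ≤ val G ν' := h2
  have hWfin : W.Finite := by
    have himage : (fun ν => supp G ν) '' W ⊆ ↑G.powerset := by
      rintro _ ⟨ν, _, rfl⟩
      rw [Finset.mem_coe, Finset.mem_powerset]
      exact supp_subset
    have hinj : Set.InjOn (fun ν => supp G ν) W := by
      rintro ν1 h1 ν2 h2 heq
      simp only at heq
      funext g
      by_cases hg : g ∈ G
      · refine unique_on_indep (S := supp G ν1) supp_subset h1.2.1 h1.1.2 h2.1.2
          (fun g hg hns => by
            by_contra h
            exact hns (mem_supp.mpr ⟨hg, h⟩))
          (fun g hg hns => by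
            by_contra h
            exact hns (heq ▸ mem_supp.mpr ⟨hg, h⟩)) g hg
      · rw [h1.2.2 g hg, h2.2.2 g hg]
    exact Set.Finite.of_finite_image
      (Set.Finite.subset (G.powerset.finite_toSet) himage) hinj
  have hWne : W.Nonempty := by
    obtain ⟨w, hw, _⟩ := hnorm ν0 h0
    exact ⟨w, hw⟩
  obtain ⟨w, hwW, hwmax⟩ := Set.Finite.exists_maximalFor (val G) W hWfin hWne
  refine ⟨w, hwW.1, hwW.2.1, ?_⟩
  intro ν2 hF2
  obtain ⟨w2, hw2W, hle⟩ := hnorm ν2 hF2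
  rcases le_total (val G w2) (val G w) with h | h
  · exact le_trans hle h
  · exact le_trans hle (hwmax hw2W h)


/-- coordinate of a weighted finset sum of integer vectors -/
lemma sum_smul_apply {n : ℕ} (G : Finset (Fin n → ℤ)) (w : (Fin n → ℤ) → ℤ) (j : Fin n) :
    (∑ g ∈ G, w g • g) j = ∑ g ∈ G, w g * g j := by
  rw [Finset.sum_apply]
  exact Finset.sum_congr rfl fun g _ => rfl

lemma cast_sum_mul {n : ℕ} (G : Finset (Fin n → ℤ)) (w : (Fin n → ℤ) → ℤ) (j : Fin n) :
    ∑ g ∈ G, ((w g : ℚ)) * (g j : ℚ) = ((∑ g ∈ G, w g * g j : ℤ) : ℚ) := by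
  push_cast
  ring

lemma multiset_count_sum {n : ℕ} (L : Multiset (Fin n → ℤ)) (G : Finset (Fin n → ℤ))
    (hsub : L.toFinset ⊆ G) :
    ∑ g ∈ G, (L.count g : ℤ) • g = L.sum := by
  classical
  have h1 : ∑ g ∈ G, (L.count g : ℤ) • g = ∑ g ∈ L.toFinset, (L.count g : ℤ) • g := by
    refine (Finset.sum_subset hsub (fun g _ hg => ?_)).symm
    rw [Multiset.count_eq_zero_of_notMem (by simpa using hg)]
    simp
  rw [h1]
  rw [Finset.sum_multiset_count L]
  exact Finset.sum_congr rfl fun g _ => natCast_zsmul g (L.count g)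

lemma zc_mono {a b : ℤ} (h : a ≤ b) : zc a ≤ zc b := by
  unfold zc
  exact_mod_cast h

end AGS

/-- For feasible solutions `z₀, z*` with `cᵀz* > cᵀz₀`, there are a Graver basis
element `g` of `A` and a positive integer `λ` such that `z₀ + λg` is feasible
and `λ · cᵀg ≥ cᵀ(z* − z₀)/(2n)`. -/
theorem augmenting_graver_step (m n : ℕ)
    (A : Matrix (Fin m) (Fin n) ℤ) (b : Fin m → ℤ) (c : Fin n → ℤ)
    (l u : Fin n → ZInf)
    (z0 zs : Fin n → ℤ)
    (hz0 : IsFeasible A b l u z0) (hzs : IsFeasible A b l u zs)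
    (hlt : ∑ i, c i * z0 i < ∑ i, c i * zs i) :
    ∃ (g : Fin n → ℤ) (lam : ℕ), InGraverBasis A g ∧ 0 < lam ∧
      IsFeasible A b l u (z0 + (lam : ℤ) • g) ∧
      ((∑ i, c i * (zs i - z0 i) : ℤ) : ℚ) / (2 * (n : ℚ)) ≤
        (lam : ℚ) * ((∑ i, c i * g i : ℤ) : ℚ) := by
  classical
  open AGS in
  set y : Fin n → ℤ := fun i => zs i - z0 i with hy
  have hyvec : y = zs - z0 := rfl
  have hcyc : IsCycle A y := by
    unfold IsCycle
    rw [hyvec, Matrix.mulVec_sub, hz0.1, hzs.1, sub_self]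
  have hcy : (0:ℤ) < ∑ i, c i * y i := by
    have h1 : ∑ i, c i * y i = ∑ i, c i * zs i - ∑ i, c i * z0 i := by
      rw [← Finset.sum_sub_distrib]
      exact Finset.sum_congr rfl fun i _ => by simp only [hy]; ring
    omega
  -- the finite set of candidate Graver elements
  set G : Finset (Fin n → ℤ) :=
    (Finset.Icc (fun j => -|y j|) (fun j => |y j|)).filter
      (fun g => InGraverBasis A g ∧ AGS.Btw y g) with hGdef
  have hmemG : ∀ g, InGraverBasis A g → AGS.Btw y g → g ∈ G := by
    intro g h1 h2
    rw [hGdef, Finset.mem_filter]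
    refine ⟨Finset.mem_Icc.mpr ⟨?_, ?_⟩, h1, h2⟩
    · intro j
      have h3 := h2 j
      show -|y j| ≤ g j
      rcases abs_cases (y j) with ⟨he, _⟩ | ⟨he, _⟩ <;> omega
    · intro j
      have h3 := h2 j
      show g j ≤ |y j|
      rcases abs_cases (y j) with ⟨he, _⟩ | ⟨he, _⟩ <;> omega
  have hGprop : ∀ g ∈ G, InGraverBasis A g ∧ AGS.Btw y g := by
    intro g hg
    exact (Finset.mem_filter.mp hg).2
  have hG : ∀ g ∈ G, AGS.Btw y g ∧ g ≠ 0 := fun g hg =>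
    ⟨(hGprop g hg).2, (hGprop g hg).1.2.1⟩
  -- initial feasible decomposition of y
  obtain ⟨L, hL, hLsum⟩ := AGS.graver_decomp A (AGS.norm1 y) y le_rfl hcyc
  have hLsub : L.toFinset ⊆ G := by
    intro g hg
    have hmem := Multiset.mem_toFinset.mp hg
    exact hmemG g (hL g hmem).1 (hL g hmem).2
  have hsumL : ∑ g ∈ G, (L.count g : ℤ) • g = y := by
    rw [multiset_count_sum L G hLsub, hLsum]
  have h0 : AGS.Feas G y (fun g => ((L.count g : ℤ) : ℚ)) := by
    constructor
    · intro g _; positivity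
    · intro j
      rw [cast_sum_mul G (fun g => (L.count g : ℤ)) j]
      congr 1
      rw [← sum_smul_apply G (fun g => (L.count g : ℤ)) j, hsumL]
  -- LP maximizer
  obtain ⟨μ, hFμ, hIμ, hmax⟩ := AGS.exists_max hG h0
  have hcard : (AGS.supp G μ).card ≤ n := by
    have h1 := LinearIndependent.fintype_card_le_finrank hIμ
    rw [Fintype.card_coe] at h1
    simpa using h1
  -- integer parts
  set κ : (Fin n → ℤ) → ℕ := fun g => (⌊μ g⌋).toNat with hκdef
  have hκint : ∀ g ∈ G, ((κ g : ℤ) : ℚ) ≤ μ g ∧ μ g < (κ g : ℤ) + 1 := by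
    intro g hg
    have hnn : 0 ≤ μ g := hFμ.1 g hg
    have h1 : ((κ g : ℕ) : ℤ) = ⌊μ g⌋ := Int.toNat_of_nonneg (Int.floor_nonneg.mpr hnn)
    constructor
    · rw [h1]; exact Int.floor_le (μ g)
    · have := Int.lt_floor_add_one (μ g)
      rw [h1]
      push_cast
      push_cast at this
      linarith
  have hκ0 : ∀ g ∈ G, g ∉ AGS.supp G μ → κ g = 0 := by
    intro g hg hns
    have : μ g = 0 := by
      by_contra h
      exact hns (AGS.mem_supp.mpr ⟨hg, h⟩)
    simp [hκdef, this]
  -- the integer remainder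
  set y' : Fin n → ℤ := fun j => y j - ∑ g ∈ G, (κ g : ℤ) * g j with hy'def
  have hy'vec : y' = y - ∑ g ∈ G, (κ g : ℤ) • g := by
    funext j
    simp only [hy'def, Pi.sub_apply]
    rw [sum_smul_apply]
  have hy'cyc : IsCycle A y' := by
    unfold IsCycle
    rw [hy'vec, Matrix.mulVec_sub, hcyc]
    have hs : A.mulVec (∑ g ∈ G, (κ g : ℤ) • g) = ∑ g ∈ G, (κ g : ℤ) • A.mulVec g := by
      simp only [← Matrix.mulVecLin_apply]
      rw [map_sum]
      exact Finset.sum_congr rfl fun g _ => by rw [map_smul]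
    rw [hs]
    have : ∀ g ∈ G, (κ g : ℤ) • A.mulVec g = 0 := by
      intro g hg
      rw [(hGprop g hg).1.1]
      simp
    rw [Finset.sum_congr rfl this]
    simp
  have hbtw' : AGS.Btw y y' := by
    intro j
    rcases le_or_gt 0 (y j) with hyj | hyj
    · have hgj : ∀ g ∈ G, 0 ≤ g j := fun g hg => by have := (hG g hg).1 j; omega
      have h1 : 0 ≤ ∑ g ∈ G, (κ g : ℤ) * g j :=
        Finset.sum_nonneg fun g hg => mul_nonneg (by positivity) (hgj g hg)
      have h2 : (∑ g ∈ G, (κ g : ℤ) * g j) ≤ y j := by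
        have hQ : ((∑ g ∈ G, (κ g : ℤ) * g j : ℤ) : ℚ) ≤ ((y j : ℤ) : ℚ) := by
          rw [← cast_sum_mul]
          calc ∑ g ∈ G, ((κ g : ℤ) : ℚ) * (g j : ℚ)
              ≤ ∑ g ∈ G, μ g * (g j : ℚ) := by
                refine Finset.sum_le_sum fun g hg => ?_
                refine mul_le_mul_of_nonneg_right (hκint g hg).1 ?_
                exact_mod_cast hgj g hg
            _ = ((y j : ℤ) : ℚ) := hFμ.2 j
        exact_mod_cast hQ
      left
      have hy'j : y' j = y j - ∑ g ∈ G, (κ g : ℤ) * g j := rfl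
      rw [hy'j]
      exact ⟨by linarith, by linarith⟩
    · have hgj : ∀ g ∈ G, g j ≤ 0 := fun g hg => by have := (hG g hg).1 j; omega
      have h1 : ∑ g ∈ G, (κ g : ℤ) * g j ≤ 0 :=
        Finset.sum_nonpos fun g hg => mul_nonpos_of_nonneg_of_nonpos (by positivity) (hgj g hg)
      have h2 : y j ≤ ∑ g ∈ G, (κ g : ℤ) * g j := by
        have hQ : ((y j : ℤ) : ℚ) ≤ ((∑ g ∈ G, (κ g : ℤ) * g j : ℤ) : ℚ) := by
          rw [← cast_sum_mul]
          calc ((y j : ℤ) : ℚ) = ∑ g ∈ G, μ g * (g j : ℚ) := (hFμ.2 j).symm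
            _ ≤ ∑ g ∈ G, ((κ g : ℤ) : ℚ) * (g j : ℚ) := by
                refine Finset.sum_le_sum fun g hg => ?_
                refine mul_le_mul_of_nonpos_right (hκint g hg).1 ?_
                exact_mod_cast hgj g hg
        exact_mod_cast hQ
      right
      have hy'j : y' j = y j - ∑ g ∈ G, (κ g : ℤ) * g j := rfl
      rw [hy'j]
      exact ⟨by linarith, by linarith⟩
  -- decompose the remainder
  obtain ⟨L', hL', hL'sum⟩ := AGS.graver_decomp A (AGS.norm1 y') y' le_rfl hy'cyc
  have hL'sub : L'.toFinset ⊆ G := by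
    intro g hg
    have hmem := Multiset.mem_toFinset.mp hg
    exact hmemG g (hL' g hmem).1 (AGS.btw_trans hbtw' (hL' g hmem).2)
  have hsumL' : ∑ g ∈ G, (L'.count g : ℤ) • g = y' := by
    rw [multiset_count_sum L' G hL'sub, hL'sum]
  set c' : (Fin n → ℤ) → ℕ := fun g => L'.count g with hc'def
  have hsumL'j : ∀ j, ∑ g ∈ G, (c' g : ℤ) * g j = y' j := by
    intro j
    rw [← sum_smul_apply G (fun g => (c' g : ℤ)) j]
    rw [show (∑ g ∈ G, (c' g : ℤ) • g) = y' from hsumL']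
  -- the combined integral decomposition of y
  set wt : (Fin n → ℤ) → ℕ := fun g => κ g + c' g with hltdef
  have hfinsum : ∀ j, ∑ g ∈ G, (wt g : ℤ) * g j = y j := by
    intro j
    have : ∀ g ∈ G, (wt g : ℤ) * g j = (κ g : ℤ) * g j + (c' g : ℤ) * g j := by
      intro g _
      simp only [hltdef]
      push_cast
      ring
    rw [Finset.sum_congr rfl this, Finset.sum_add_distrib, hsumL'j j]
    simp only [hy'def]
    ring
  -- LP optimality bounds the size of the new decomposition
  have hFf : AGS.Feas G y (fun g => ((wt g : ℤ) : ℚ)) := by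
    constructor
    · intro g _; positivity
    · intro j
      rw [cast_sum_mul G (fun g => (wt g : ℤ)) j]
      exact_mod_cast congrArg (fun z : ℤ => (z : ℚ)) (hfinsum j)
  have hopt := hmax _ hFf
  have hc'q : ∑ g ∈ G, ((c' g : ℤ) : ℚ) ≤ (n : ℚ) := by
    have hval1 : AGS.val G (fun g => ((wt g : ℤ) : ℚ))
        = ∑ g ∈ G, ((κ g : ℤ) : ℚ) + ∑ g ∈ G, ((c' g : ℤ) : ℚ) := by
      unfold AGS.val
      rw [← Finset.sum_add_distrib]
      refine Finset.sum_congr rfl fun g _ => ?_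
      simp only [hltdef]
      push_cast
      ring
    have hfrac : AGS.val G μ - ∑ g ∈ G, ((κ g : ℤ) : ℚ) ≤ (n : ℚ) := by
      have hsplit : AGS.val G μ - ∑ g ∈ G, ((κ g : ℤ) : ℚ)
          = ∑ g ∈ G, (μ g - ((κ g : ℤ) : ℚ)) := by
        unfold AGS.val
        rw [← Finset.sum_sub_distrib]
      rw [hsplit]
      have hres : ∑ g ∈ G, (μ g - ((κ g : ℤ) : ℚ))
          = ∑ g ∈ AGS.supp G μ, (μ g - ((κ g : ℤ) : ℚ)) := by
        refine (Finset.sum_subset AGS.supp_subset (fun g hg hns => ?_)).symm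
        have hμ0 : μ g = 0 := by
          by_contra h
          exact hns (AGS.mem_supp.mpr ⟨hg, h⟩)
        rw [hμ0, hκ0 g hg hns]
        simp
      rw [hres]
      calc ∑ g ∈ AGS.supp G μ, (μ g - ((κ g : ℤ) : ℚ))
          ≤ ∑ _g ∈ AGS.supp G μ, (1:ℚ) := by
            refine Finset.sum_le_sum fun g hg => ?_
            have := (hκint g (AGS.supp_subset hg)).2
            linarith
        _ = ((AGS.supp G μ).card : ℚ) := by simp
        _ ≤ (n : ℚ) := by exact_mod_cast hcard
    unfold AGS.val at hopt
    rw [show (∑ g ∈ G, (fun g => ((wt g : ℤ) : ℚ)) g) = AGS.val G (fun g => ((wt g : ℤ) : ℚ))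
      from rfl] at hopt
    rw [hval1] at hopt
    have : AGS.val G μ = ∑ g ∈ G, μ g := rfl
    linarith
  have hc'n : ∑ g ∈ G, c' g ≤ n := by
    have : ((∑ g ∈ G, c' g : ℕ) : ℚ) ≤ (n : ℚ) := by
      push_cast
      push_cast at hc'q
      exact hc'q
    exact_mod_cast this
  -- support of the combined decomposition has at most 2n elements
  set Tf : Finset (Fin n → ℤ) := G.filter (fun g => wt g ≠ 0) with hTfdef
  have hTsub : Tf ⊆ AGS.supp G μ ∪ G.filter (fun g => c' g ≠ 0) := by
    intro g hg
    obtain ⟨hgG, hne⟩ := Finset.mem_filter.mp hg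
    rcases Nat.eq_zero_or_pos (c' g) with hc0 | hcpos
    · have hκne : κ g ≠ 0 := by
        simp only [hltdef] at hne
        omega
      have hμne : μ g ≠ 0 := by
        intro h
        apply hκne
        simp [hκdef, h]
      exact Finset.mem_union_left _ (AGS.mem_supp.mpr ⟨hgG, hμne⟩)
    · exact Finset.mem_union_right _ (Finset.mem_filter.mpr ⟨hgG, by omega⟩)
  have hT2n : Tf.card ≤ 2 * n := by
    have h1 := Finset.card_le_card hTsub
    have h2 := Finset.card_union_le (AGS.supp G μ) (G.filter (fun g => c' g ≠ 0))
    have h3 : (G.filter (fun g => c' g ≠ 0)).card ≤ ∑ g ∈ G, c' g := by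
      calc (G.filter (fun g => c' g ≠ 0)).card
          = ∑ g ∈ G.filter (fun g => c' g ≠ 0), 1 := by
            rw [Finset.card_eq_sum_ones]
        _ ≤ ∑ g ∈ G.filter (fun g => c' g ≠ 0), c' g := by
            refine Finset.sum_le_sum fun g hg => ?_
            have := (Finset.mem_filter.mp hg).2
            omega
        _ ≤ ∑ g ∈ G, c' g := by
            refine Finset.sum_le_sum_of_subset (Finset.filter_subset _ _)
    omega
  -- cost identity
  have hcost : ∑ g ∈ G, (wt g : ℤ) * (∑ i, c i * g i) = ∑ i, c i * y i := by
    calc ∑ g ∈ G, (wt g : ℤ) * (∑ i, c i * g i)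
        = ∑ g ∈ G, ∑ i, c i * ((wt g : ℤ) * g i) := by
          refine Finset.sum_congr rfl fun g _ => ?_
          rw [Finset.mul_sum]
          exact Finset.sum_congr rfl fun i _ => by ring
      _ = ∑ i, ∑ g ∈ G, c i * ((wt g : ℤ) * g i) := Finset.sum_comm
      _ = ∑ i, c i * y i := by
          refine Finset.sum_congr rfl fun i _ => ?_
          rw [← Finset.mul_sum, hfinsum i]
  have hcostT : ∑ g ∈ Tf, (wt g : ℤ) * (∑ i, c i * g i) = ∑ i, c i * y i := by
    rw [← hcost]
    refine Finset.sum_subset (Finset.filter_subset _ _) (fun g hg hns => ?_)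
    have : wt g = 0 := by
      by_contra h
      exact hns (Finset.mem_filter.mpr ⟨hg, h⟩)
    rw [this]
    simp
  -- nonemptiness and averaging
  set cyQ : ℚ := ((∑ i, c i * y i : ℤ) : ℚ) with hcyQdef
  have hcyQpos : 0 < cyQ := by
    rw [hcyQdef]
    exact_mod_cast hcy
  have hTne : Tf.Nonempty := by
    rw [Finset.nonempty_iff_ne_empty]
    intro h
    rw [h] at hcostT
    simp at hcostT
    linarith
  have hcostQ : ∑ g ∈ Tf, ((wt g : ℚ)) * ((∑ i, c i * g i : ℤ) : ℚ) = cyQ := by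
    rw [hcyQdef, ← hcostT]
    push_cast
    ring
  have htpos : 0 < (Tf.card : ℚ) := by
    have := Finset.card_pos.mpr hTne
    exact_mod_cast this
  have havg : ∃ g ∈ Tf, cyQ / (Tf.card : ℚ) ≤ ((wt g : ℚ)) * ((∑ i, c i * g i : ℤ) : ℚ) := by
    refine Finset.exists_le_of_sum_le hTne ?_
    rw [hcostQ, Finset.sum_const, nsmul_eq_mul]
    rw [mul_div_cancel₀ _ (ne_of_gt htpos)]
  obtain ⟨g, hgT, hglb⟩ := havg
  have hgG : g ∈ G := Finset.filter_subset _ _ hgT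
  have hltg : wt g ≠ 0 := (Finset.mem_filter.mp hgT).2
  refine ⟨g, wt g, (hGprop g hgG).1, Nat.pos_of_ne_zero hltg, ?_, ?_⟩
  · -- feasibility of z0 + wt g • g
    constructor
    · rw [Matrix.mulVec_add, Matrix.mulVec_smul, hz0.1]
      have : A.mulVec g = 0 := (hGprop g hgG).1.1
      rw [this]
      simp
    · intro j
      have happ : (z0 + ((wt g : ℕ) : ℤ) • g) j = z0 j + (wt g : ℤ) * g j := rfl
      have hbnd : (0 ≤ (wt g : ℤ) * g j ∧ (wt g : ℤ) * g j ≤ y j) ∨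
          (y j ≤ (wt g : ℤ) * g j ∧ (wt g : ℤ) * g j ≤ 0) := by
        rcases le_or_gt 0 (y j) with hyj | hyj
        · have hterm : ∀ g' ∈ G, 0 ≤ (wt g' : ℤ) * g' j := by
            intro g' hg'
            rcases (hG g' hg').1 j with ⟨ha, _⟩ | ⟨ha, hb⟩
            · positivity
            · have hgj : g' j = 0 := by linarith
              rw [hgj, mul_zero]
          have hle := Finset.single_le_sum hterm hgG
          rw [hfinsum j] at hle
          exact Or.inl ⟨hterm g hgG, hle⟩
        · have hterm : ∀ g' ∈ G, 0 ≤ -((wt g' : ℤ) * g' j) := by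
            intro g' hg'
            have hgj : g' j ≤ 0 := by
              rcases (hG g' hg').1 j with ⟨ha, hb⟩ | ⟨ha, hb⟩ <;> linarith
            have hmul : (wt g' : ℤ) * g' j ≤ 0 :=
              mul_nonpos_of_nonneg_of_nonpos (by positivity) hgj
            linarith
          have hle := Finset.single_le_sum hterm hgG
          have hsum : ∑ g' ∈ G, -((wt g' : ℤ) * g' j) = -(y j) := by
            rw [← hfinsum j, ← Finset.sum_neg_distrib]
          rw [hsum] at hle
          have hnn := hterm g hgG
          refine Or.inr ⟨by linarith, by linarith⟩
      obtain ⟨hl0, hu0⟩ := hz0.2 j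
      obtain ⟨hls, hus⟩ := hzs.2 j
      have hyzs : z0 j + y j = zs j := by simp [hy]
      rw [happ]
      rcases hbnd with ⟨ha, hb⟩ | ⟨ha, hb⟩
      · constructor
        · exact le_trans hl0 (zc_mono (by linarith))
        · exact le_trans (zc_mono (by linarith)) hus
      · constructor
        · exact le_trans hls (zc_mono (by linarith))
        · exact le_trans (zc_mono (by linarith)) hu0
  · -- the value inequality
    have hteq : ((Tf.card : ℚ)) ≤ 2 * (n : ℚ) := by
      have : ((Tf.card : ℚ)) ≤ ((2 * n : ℕ) : ℚ) := by exact_mod_cast hT2n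
      push_cast at this
      linarith
    have hdiv : cyQ / (2 * (n : ℚ)) ≤ cyQ / (Tf.card : ℚ) := by
      have hinv : 1 / (2 * (n:ℚ)) ≤ 1 / (Tf.card : ℚ) := one_div_le_one_div_of_le htpos hteq
      calc cyQ / (2 * (n:ℚ)) = cyQ * (1 / (2 * (n:ℚ))) := by ring
        _ ≤ cyQ * (1 / (Tf.card:ℚ)) := mul_le_mul_of_nonneg_left hinv (le_of_lt hcyQpos)
        _ = cyQ / (Tf.card:ℚ) := by ring
    exact le_trans hdiv hglb
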